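/- Let r ≥ 2 and let F be a homogeneous polynomial of degree 2 in r real variables x₁,…,x_r that vanishes on the affine cone of the rational normal curve, i.e., F(s^{r−1}, s^{r−2}t, …, s^{r−1−i}t^{i}, …, t^{r−1}) = 0 for all s,t ∈ ℝ. If there exist homogeneous linear forms G and H in x₁,…,x_r such that F lies in the linear span of G², G·H, and H², then F = 0. (In other words, the space of quadratic polynomials vanishing on the rational normal curve contains no nonzero element of rank ≤ 2.) -/

import Mathlib

open MvPolynomial

private lemma deg_one_single' {σ : Type*} (d : σ →₀ ℕ) (h : d.degree = 1) :
    ∃ j, d = Finsupp.single j 1 := by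
  classical
  have hd0 : d ≠ 0 := by rintro rfl; simp at h
  obtain ⟨j, hj⟩ := Finsupp.ne_iff.mp hd0
  simp only [Finsupp.coe_zero, Pi.zero_apply] at hj
  refine ⟨j, ?_⟩
  have h1 : d j = 1 := le_antisymm (h ▸ Finsupp.le_degree j d) (Nat.one_le_iff_ne_zero.mpr hj)
  ext i
  rcases eq_or_ne i j with rfl | hij
  · simp [h1]
  · simp only [Finsupp.single_eq_of_ne' (Ne.symm hij)]
    by_contra hi
    have : 2 ≤ d.degree := by
      calc 2 = 1 + 1 := rfl
      _ ≤ d i + d j := Nat.add_le_add (Nat.one_le_iff_ne_zero.mpr hi) (by omega)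
      _ ≤ d.degree := by
        rw [Finsupp.degree]
        have hii : i ∈ d.support := Finsupp.mem_support_iff.mpr hi
        have hjj : j ∈ d.support := Finsupp.mem_support_iff.mpr hj
        calc d i + d j = ∑ k ∈ {i, j}, d k := by rw [Finset.sum_pair hij]
        _ ≤ _ := Finset.sum_le_sum_of_subset (by
            intro k hk; simp at hk; rcases hk with rfl|rfl <;> assumption)
    omega

private lemma linear_rep' {r : ℕ} (L : MvPolynomial (Fin r) ℝ) (hL : L.IsHomogeneous 1) :
    L = ∑ j : Fin r, monomial (Finsupp.single j 1) (coeff (Finsupp.single j 1) L) := by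
  ext d
  rw [coeff_sum]
  by_cases hd : ∃ j : Fin r, d = Finsupp.single j 1
  · obtain ⟨j, rfl⟩ := hd
    rw [Finset.sum_eq_single j]
    · simp [coeff_monomial]
    · intro k _ hk
      rw [coeff_monomial, if_neg]
      intro hcon
      exact hk (Finsupp.single_left_injective one_ne_zero hcon)
    · simp
  · have h1 : coeff d L = 0 := by
      by_contra hc
      have := hL hc
      replace this : d.degree = 1 := by rw [Finsupp.degree_eq_weight_one]; exact this
      exact hd (deg_one_single' d this)
    rw [h1]
    symm
    apply Finset.sum_eq_zero
    intro k _
    rw [coeff_monomial, if_neg]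
    exact fun hcon => hd ⟨k, hcon.symm⟩

private lemma linear_zero' {r : ℕ} (L : MvPolynomial (Fin r) ℝ) (hL : L.IsHomogeneous 1)
    (h : ∀ t : ℝ, eval (fun i : Fin r => t ^ (i : ℕ)) L = 0) : L = 0 := by
  set c : Fin r → ℝ := fun j => coeff (Finsupp.single j 1) L with hc
  set p : Polynomial ℝ := ∑ j : Fin r, Polynomial.C (c j) * Polynomial.X ^ (j : ℕ) with hp
  have hpz : p = 0 := by
    apply Polynomial.funext
    intro t
    have := h t
    rw [linear_rep' L hL] at this
    simp only [eval_sum, eval_monomial] at this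
    rw [hp, Polynomial.eval_finset_sum]
    simp only [Polynomial.eval_mul, Polynomial.eval_C, Polynomial.eval_pow, Polynomial.eval_X]
    simpa [Finsupp.prod_single_index] using this
  have hcz : ∀ j : Fin r, c j = 0 := by
    intro j
    have : p.coeff (j : ℕ) = 0 := by rw [hpz]; simp
    rw [hp, Polynomial.finset_sum_coeff] at this
    rw [Finset.sum_eq_single j] at this
    · simpa using this
    · intro k _ hk
      simp only [Polynomial.coeff_C_mul, Polynomial.coeff_X_pow, Fin.val_eq_val]
      rw [if_neg (fun h => hk h.symm), mul_zero]
    · simp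
  rw [linear_rep' L hL]
  apply Finset.sum_eq_zero
  intro j _
  rw [show coeff (Finsupp.single j 1) L = c j from rfl, hcz j, monomial_zero]

/-- The Veronese substitution map. -/
noncomputable def rncPhi (r : ℕ) : MvPolynomial (Fin r) ℝ →ₐ[ℝ] MvPolynomial (Fin 2) ℝ :=
  aeval (fun i : Fin r => X 0 ^ (r - 1 - (i : ℕ)) * X 1 ^ (i : ℕ))

lemma eval_aeval' {r : ℕ} (P : MvPolynomial (Fin r) ℝ) (x : Fin 2 → ℝ)
    (v : Fin r → MvPolynomial (Fin 2) ℝ) :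
    eval x (aeval v P) = eval (fun i => eval x (v i)) P := by
  rw [show (eval x (aeval v P)) = aeval x (aeval v P) from rfl, comp_aeval_apply]
  rfl

lemma rncPhi_eval {r : ℕ} (P : MvPolynomial (Fin r) ℝ) (x : Fin 2 → ℝ) :
    eval x (rncPhi r P) =
      eval (fun i : Fin r => (x 0) ^ (r - 1 - (i : ℕ)) * (x 1) ^ (i : ℕ)) P := by
  rw [rncPhi, eval_aeval']
  simp

lemma rncPhi_key {r : ℕ} (L : MvPolynomial (Fin r) ℝ) (hL : L.IsHomogeneous 1)
    (h : rncPhi r L = 0) : L = 0 := by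
  apply linear_zero' L hL
  intro t
  have := congrArg (eval (fun b : Fin 2 => if b = 0 then 1 else t)) h
  rw [rncPhi_eval, map_zero] at this
  simpa using this

lemma rnc_collapse {r : ℕ} (F G H : MvPolynomial (Fin r) ℝ) (hH : H.IsHomogeneous 1)
    (a b c μ : ℝ) (hμ : G = μ • H)
    (hFabc : F = a • G ^ 2 + b • (G * H) + c • H ^ 2)
    (hφF : rncPhi r F = 0) : F = 0 := by
  have hF2 : F = (a * μ ^ 2 + b * μ + c) • H ^ 2 := by
    rw [hFabc, hμ]
    simp only [smul_eq_C_mul, map_add, map_mul, map_pow]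
    ring
  have h0 : C (a * μ ^ 2 + b * μ + c) * (rncPhi r H) ^ 2 = 0 := by
    rw [← map_pow, ← algebraMap_eq, ← Algebra.smul_def, ← map_smul, ← hF2, hφF]
  rcases mul_eq_zero.mp h0 with h1 | h2
  · rw [hF2, show (a * μ ^ 2 + b * μ + c) = 0 from by
      simpa using (C_injective (Fin 2) ℝ) (h1.trans (map_zero C).symm), zero_smul]
  · have : H = 0 := rncPhi_key H hH (pow_eq_zero_iff two_ne_zero |>.mp h2)
    rw [hF2, this]
    simp

lemma rnc_core {r : ℕ} (F G H : MvPolynomial (Fin r) ℝ)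
    (hG : G.IsHomogeneous 1) (hH : H.IsHomogeneous 1)
    (a b c : ℝ) (ha : a ≠ 0)
    (hFabc : F = a • G ^ 2 + b • (G * H) + c • H ^ 2)
    (hφF : rncPhi r F = 0) : F = 0 := by
  set gg := rncPhi r G with hgg
  set hh := rncPhi r H with hhh
  have hq : C a * gg ^ 2 + C b * (gg * hh) + C c * hh ^ 2 = 0 := by
    rw [← hφF, hFabc]
    simp only [smul_eq_C_mul, map_add, map_mul, map_pow, ← algebraMap_eq, AlgHom.commutes]
    rfl
  by_cases hD : 0 ≤ b ^ 2 - 4 * a * c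
  · -- discriminant nonneg: the form factors
    set e := Real.sqrt (b ^ 2 - 4 * a * c) with he
    have he2 : e ^ 2 = b ^ 2 - 4 * a * c := Real.sq_sqrt hD
    have hcc : (C b : MvPolynomial (Fin 2) ℝ) ^ 2 - C e ^ 2 - 4 * C a * C c = 0 := by
      have h0 : b ^ 2 - e ^ 2 - 4 * a * c = 0 := by rw [he2]; ring
      have := congrArg (C : ℝ → MvPolynomial (Fin 2) ℝ) h0
      simpa [map_sub, map_mul, map_pow, map_ofNat] using this
    have hfact : (C (2 * a) * gg + C (b + e) * hh) * (C (2 * a) * gg + C (b - e) * hh) = 0 := by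
      have : (C (2 * a) * gg + C (b + e) * hh) * (C (2 * a) * gg + C (b - e) * hh) =
          C 4 * C a * (C a * gg ^ 2 + C b * (gg * hh) + C c * hh ^ 2) := by
        simp only [map_mul, map_add, map_sub, map_ofNat]
        linear_combination hh ^ 2 * hcc
      rw [this, hq, mul_zero]
    have hlin : ∀ α β : ℝ, C α * gg + C β * hh = 0 → α • G + β • H = 0 := by
      intro α β hαβ
      have hhom : (α • G + β • H).IsHomogeneous 1 := by
        rw [← mem_homogeneousSubmodule]
        exact Submodule.add_mem _
          (Submodule.smul_mem _ _ ((mem_homogeneousSubmodule _ _).mpr hG))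
          (Submodule.smul_mem _ _ ((mem_homogeneousSubmodule _ _).mpr hH))
      apply rncPhi_key _ hhom
      rw [map_add]
      simp only [smul_eq_C_mul, map_mul, ← algebraMap_eq, AlgHom.commutes]
      simp only [algebraMap_eq]
      exact hαβ
    have finish2 : ∀ β : ℝ, C (2 * a) * gg + C β * hh = 0 → F = 0 := by
      intro β h1
      have h2a : (2 * a : ℝ) ≠ 0 := by simpa using ha
      have h2 := hlin (2 * a) β h1
      have h3 : (2 * a) • G = -(β • H) := by rwa [add_eq_zero_iff_eq_neg] at h2
      have hGH : G = (-(β / (2 * a))) • H := by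
        rw [← inv_smul_smul₀ h2a G, h3, smul_neg, smul_smul, ← neg_smul]
        congr 1
        field_simp
      exact rnc_collapse F G H hH a b c _ hGH hFabc hφF
    rcases mul_eq_zero.mp hfact with h1 | h1
    · exact finish2 _ h1
    · exact finish2 _ h1
  · -- negative discriminant: G and H vanish identically
    have hD' : b ^ 2 - 4 * a * c < 0 := lt_of_not_ge hD
    have hgz : ∀ x : Fin 2 → ℝ, eval x gg = 0 ∧ eval x hh = 0 := by
      intro x
      have hx := congrArg (eval x) hq
      simp only [map_add, map_mul, map_pow, eval_C, map_zero] at hx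
      have key : (2 * a * eval x gg + b * eval x hh) ^ 2
          + (4 * a * c - b ^ 2) * (eval x hh) ^ 2 = 0 := by
        linear_combination (4 * a) * hx
      have hq0 : eval x hh = 0 := by
        by_contra hqne
        have hq2 : 0 < (eval x hh) ^ 2 := by positivity
        have hpos : 0 < (4 * a * c - b ^ 2) * (eval x hh) ^ 2 :=
          mul_pos (by linarith) hq2
        linarith [key, sq_nonneg (2 * a * eval x gg + b * eval x hh), hpos]
      have hp0 : eval x gg = 0 := by
        rw [hq0] at key
        have h2 : (2 * a * eval x gg) ^ 2 = 0 := by linear_combination key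
        have h3 := pow_eq_zero_iff (two_ne_zero) |>.mp h2
        rcases mul_eq_zero.mp h3 with h4 | h4
        · exact absurd h4 (by simpa using ha)
        · exact h4
      exact ⟨hp0, hq0⟩
    have hG0 : G = 0 := rncPhi_key G hG (MvPolynomial.funext fun x => by
      rw [map_zero]; exact (hgz x).1)
    have hH0 : H = 0 := rncPhi_key H hH (MvPolynomial.funext fun x => by
      rw [map_zero]; exact (hgz x).2)
    rw [hFabc, hG0, hH0]
    simp

/-- A homogeneous quadratic polynomial in `r ≥ 2` variables vanishing on
the affine cone of the rational normal curve and lying in the span of `G²`, `G·H`, `H²`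
for some linear forms `G`, `H` (i.e. of rank ≤ 2) must be zero. -/
theorem stmt_7 (r : ℕ) (hr : 2 ≤ r) (F : MvPolynomial (Fin r) ℝ)
    (hF : F.IsHomogeneous 2)
    (hvan : ∀ s t : ℝ,
      MvPolynomial.eval (fun i : Fin r => s ^ (r - 1 - (i : ℕ)) * t ^ (i : ℕ)) F = 0)
    (G H : MvPolynomial (Fin r) ℝ)
    (hG : G.IsHomogeneous 1) (hH : H.IsHomogeneous 1)
    (hmem : F ∈ Submodule.span ℝ ({G ^ 2, G * H, H ^ 2} : Set (MvPolynomial (Fin r) ℝ))) :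
    F = 0 := by
  rw [show ({G ^ 2, G * H, H ^ 2} : Set (MvPolynomial (Fin r) ℝ)) =
      insert (G ^ 2) {G * H, H ^ 2} from rfl, Submodule.mem_span_insert] at hmem
  obtain ⟨a, z, hz, hFeq⟩ := hmem
  rw [Submodule.mem_span_pair] at hz
  obtain ⟨b, c, hzeq⟩ := hz
  have hFabc : F = a • G ^ 2 + b • (G * H) + c • H ^ 2 := by
    rw [hFeq, ← hzeq, ← add_assoc]
  have hφF : rncPhi r F = 0 := by
    apply MvPolynomial.funext
    intro x
    rw [map_zero, rncPhi_eval]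
    exact hvan (x 0) (x 1)
  by_cases ha : a ≠ 0
  · exact rnc_core F G H hG hH a b c ha hFabc hφF
  push_neg at ha
  by_cases hc : c ≠ 0
  · refine rnc_core F H G hH hG c b a hc ?_ hφF
    rw [hFabc]
    simp only [smul_eq_C_mul]
    ring
  push_neg at hc
  -- a = c = 0
  have hb : C b * (rncPhi r G * rncPhi r H) = 0 := by
    rw [← hφF, hFabc, ha, hc]
    simp only [zero_smul, zero_add, add_zero, smul_eq_C_mul, map_mul, ← algebraMap_eq,
      AlgHom.commutes]
  rcases mul_eq_zero.mp hb with h1 | h1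
  · have hb0 : b = 0 := by
      simpa using (C_injective (Fin 2) ℝ) (h1.trans (map_zero C).symm)
    rw [hFabc, ha, hc, hb0]
    simp
  · rcases mul_eq_zero.mp h1 with h2 | h2
    · rw [hFabc, ha, hc, rncPhi_key G hG h2]
      simp
    · rw [hFabc, ha, hc, rncPhi_key H hH h2]
      simp
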